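/- Let n ≥ 1, α, t, p ∈ (0,∞), r ∈ (1,∞) and q ∈ [1,∞). There is a constant C > 0, independent of the data, such that: whenever (λ_k)_{k∈ℤ} are nonnegative reals with ∑_{k∈ℤ} λ_k^p < ∞, (b_k)_{k∈ℤ} are measurable functions with supp(b_k) ⊆ B_k and ‖b_k‖_{(E_r^q)_t} ≤ 2^{-kα} for every k ∈ ℤ, and f : ℝⁿ → ℂ satisfies f(x) = ∑_{k∈ℤ} λ_k b_k(x) with the series converging absolutely for almost every x, then ‖f‖_{(K̇E^{α,p}_{q,r})_t}^p ≤ C ∑_{k∈ℤ} λ_k^p; in particular f ∈ (K̇E^{α,p}_{q,r})_t(ℝⁿ). -/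

import Mathlib

open MeasureTheory Metric Set ENNReal
open scoped NNReal

noncomputable section

abbrev En (n : ℕ) : Type := EuclideanSpace ℝ (Fin n)

/-- Slice norm `‖f‖_{(E_r^q)_t}` for `ℝ≥0∞`-valued functions. -/
def sliceNorm (n : ℕ) (t r : ℝ) (q : ℝ≥0∞) (g : En n → ℝ≥0∞) : ℝ≥0∞ :=
  if q = ∞ then
    essSup (fun x => ((volume (ball x t))⁻¹ * ∫⁻ y in ball x t, g y ^ r) ^ (1 / r)) volume
  else
    (∫⁻ x, (((volume (ball x t))⁻¹ * ∫⁻ y in ball x t, g y ^ r) ^ (1 / r)) ^ q.toReal) ^ (1 / q.toReal)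

/-- Slice norm of a complex-valued function. -/
def sliceNormC (n : ℕ) (t r : ℝ) (q : ℝ≥0∞) (f : En n → ℂ) : ℝ≥0∞ :=
  sliceNorm n t r q fun y => (‖f y‖₊ : ℝ≥0∞)

/-- The ball `B_k = {x : |x| ≤ 2^k}`. -/
def ballZ (n : ℕ) (k : ℤ) : Set (En n) := closedBall 0 ((2 : ℝ) ^ k)

/-- The shell `S_k = B_k \ B_{k-1}`. -/
def shell (n : ℕ) (k : ℤ) : Set (En n) := ballZ n k \ ballZ n (k - 1)

/-- Homogeneous Herz-slice norm of an `ℝ≥0∞`-valued function. -/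
def herzHom (n : ℕ) (t r : ℝ) (q : ℝ≥0∞) (α : ℝ) (p : ℝ≥0∞) (g : En n → ℝ≥0∞) : ℝ≥0∞ :=
  if p = ∞ then
    ⨆ k : ℤ, (2 : ℝ≥0∞) ^ ((k : ℝ) * α) * sliceNorm n t r q ((shell n k).indicator g)
  else
    (∑' k : ℤ, ((2 : ℝ≥0∞) ^ ((k : ℝ) * α) * sliceNorm n t r q ((shell n k).indicator g)) ^ p.toReal) ^ (1 / p.toReal)

/-- Homogeneous Herz-slice norm of a complex-valued function. -/
def herzHomC (n : ℕ) (t r : ℝ) (q : ℝ≥0∞) (α : ℝ) (p : ℝ≥0∞) (f : En n → ℂ) : ℝ≥0∞ :=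
  herzHom n t r q α p fun y => (‖f y‖₊ : ℝ≥0∞)

/-- The `k`-th piece in the non-homogeneous decomposition: `B_0` for `k = 0`, `S_k` for `k ≥ 1`. -/
def pieceN (n : ℕ) (k : ℕ) : Set (En n) := if k = 0 then ballZ n 0 else shell n k

/-- Non-homogeneous Herz-slice norm of an `ℝ≥0∞`-valued function. -/
def herzNonHom (n : ℕ) (t r : ℝ) (q : ℝ≥0∞) (α : ℝ) (p : ℝ≥0∞) (g : En n → ℝ≥0∞) : ℝ≥0∞ :=
  if p = ∞ then
    ⨆ k : ℕ, (2 : ℝ≥0∞) ^ ((k : ℝ) * α) * sliceNorm n t r q ((pieceN n k).indicator g)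
  else
    (∑' k : ℕ, ((2 : ℝ≥0∞) ^ ((k : ℝ) * α) * sliceNorm n t r q ((pieceN n k).indicator g)) ^ p.toReal) ^ (1 / p.toReal)

/-- Non-homogeneous Herz-slice norm of a complex-valued function. -/
def herzNonHomC (n : ℕ) (t r : ℝ) (q : ℝ≥0∞) (α : ℝ) (p : ℝ≥0∞) (f : En n → ℂ) : ℝ≥0∞ :=
  herzNonHom n t r q α p fun y => (‖f y‖₊ : ℝ≥0∞)

/-- Hardy–Littlewood maximal operator. -/
def maximal (n : ℕ) (f : En n → ℂ) (x : En n) : ℝ≥0∞ :=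
  ⨆ (ρ : ℝ) (_ : 0 < ρ), (volume (ball x ρ))⁻¹ * ∫⁻ y in ball x ρ, (‖f y‖₊ : ℝ≥0∞)


lemma my_rpow_iSup {ι : Type*} {c : ℝ} (hc : 0 < c) (f : ι → ℝ≥0∞) :
    (⨆ i, f i) ^ c = ⨆ i, f i ^ c := by
  have h := (ENNReal.orderIsoRpow c hc).map_iSup f
  simp only [ENNReal.orderIsoRpow_apply] at h
  exact h

lemma my_tsum_rpow_le {P : ℝ} (hP0 : 0 < P) (hP1 : P ≤ 1) (x : ℕ → ℝ≥0∞) :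
    (∑' j, x j) ^ P ≤ ∑' j, x j ^ P := by
  have fin : ∀ N : ℕ, (∑ j ∈ Finset.range N, x j) ^ P ≤ ∑ j ∈ Finset.range N, x j ^ P := by
    intro N
    induction N with
    | zero => simp [ENNReal.zero_rpow_of_pos hP0]
    | succ N ih =>
      rw [Finset.sum_range_succ, Finset.sum_range_succ]
      exact le_trans (ENNReal.rpow_add_le_add_rpow _ _ hP0.le hP1) (add_le_add ih le_rfl)
  rw [ENNReal.tsum_eq_iSup_nat]
  calc (⨆ N, ∑ j ∈ Finset.range N, x j) ^ P
      = ⨆ N, (∑ j ∈ Finset.range N, x j) ^ P := my_rpow_iSup hP0 _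
    _ ≤ ∑' j, x j ^ P :=
        iSup_le fun N => le_trans (fin N) (ENNReal.sum_le_tsum _)

lemma my_tsum_rpow_le_int {P : ℝ} (hP0 : 0 < P) (hP1 : P ≤ 1) (x : ℤ → ℝ≥0∞) :
    (∑' j, x j) ^ P ≤ ∑' j, x j ^ P := by
  rw [← Equiv.tsum_eq (Denumerable.eqv ℤ).symm x,
    ← Equiv.tsum_eq (Denumerable.eqv ℤ).symm (fun j => x j ^ P)]
  exact my_tsum_rpow_le hP0 hP1 _

lemma my_tsum_mul_le {P' P : ℝ} (hpq : P'.HolderConjugate P) (u v : ℤ → ℝ≥0∞) :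
    ∑' j, u j * v j ≤ (∑' j, u j ^ P') ^ (1 / P') * (∑' j, v j ^ P) ^ (1 / P) := by
  have h := ENNReal.lintegral_mul_le_Lp_mul_Lq (Measure.count : Measure ℤ) hpq
    (measurable_of_countable u).aemeasurable (measurable_of_countable v).aemeasurable
  simpa [lintegral_count, Pi.mul_apply] using h

lemma geomZ_right (β : ℝ) (k : ℤ) :
    (∑' j : ℤ, if k ≤ j then (2:ℝ≥0∞) ^ (((k - j : ℤ) : ℝ) * β) else 0)
      = ∑' m : ℕ, ((2:ℝ≥0∞) ^ (-β)) ^ m := by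
  have hinj : Function.Injective (fun m : ℕ => k + (m : ℤ)) := fun a b h => by
    simpa using h
  rw [← Function.Injective.tsum_eq hinj ?_]
  · refine tsum_congr fun m => ?_
    rw [if_pos (by omega)]
    have h1 : ((k - (k + (m:ℤ)) : ℤ) : ℝ) * β = (-β) * (m : ℕ) := by push_cast; ring
    rw [h1, ENNReal.rpow_mul, ENNReal.rpow_natCast]
  · intro j hj
    have h2 : k ≤ j := by
      by_contra h
      simp [if_neg h] at hj
    exact ⟨(j - k).toNat, show k + ((j - k).toNat : ℤ) = j by omega⟩

lemma geomZ_left (β : ℝ) (j : ℤ) :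
    (∑' k : ℤ, if k ≤ j then (2:ℝ≥0∞) ^ (((k - j : ℤ) : ℝ) * β) else 0)
      = ∑' m : ℕ, ((2:ℝ≥0∞) ^ (-β)) ^ m := by
  have hinj : Function.Injective (fun m : ℕ => j - (m : ℤ)) := fun a b h => by
    simpa using h
  rw [← Function.Injective.tsum_eq hinj ?_]
  · refine tsum_congr fun m => ?_
    rw [if_pos (by omega)]
    have h1 : ((j - (m:ℤ) - j : ℤ) : ℝ) * β = (-β) * (m : ℕ) := by push_cast; ring
    rw [h1, ENNReal.rpow_mul, ENNReal.rpow_natCast]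
  · intro k hk
    have h2 : k ≤ j := by
      by_contra h
      simp [if_neg h] at hk
    exact ⟨(j - k).toNat, show j - ((j - k).toNat : ℤ) = k by omega⟩

lemma geom_ne_top {β : ℝ} (hβ : 0 < β) : (∑' m : ℕ, ((2:ℝ≥0∞) ^ (-β)) ^ m) ≠ ∞ := by
  rw [ENNReal.tsum_geometric]
  have hlt : (2:ℝ≥0∞) ^ (-β) < 1 :=
    ENNReal.rpow_lt_one_of_one_lt_of_neg (by norm_num) (by linarith)
  simp only [ne_eq, ENNReal.inv_eq_top, tsub_eq_zero_iff_le]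
  exact fun h => absurd (lt_of_lt_of_le hlt (le_of_eq rfl)) (by simpa using not_lt.2 h)

lemma geom_one_le {β : ℝ} : (1:ℝ≥0∞) ≤ ∑' m : ℕ, ((2:ℝ≥0∞) ^ (-β)) ^ m := by
  calc (1:ℝ≥0∞) = ((2:ℝ≥0∞) ^ (-β)) ^ (0:ℕ) := by rw [pow_zero]
    _ ≤ _ := ENNReal.le_tsum 0

/-- Main combinatorial estimate. -/
lemma key_sum {α P : ℝ} (hα : 0 < α) (hP0 : 0 < P) (lam : ℤ → ℝ≥0) :
    ∑' k : ℤ, (∑' j : ℤ, (lam j : ℝ≥0∞)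
        * (if k ≤ j then (2:ℝ≥0∞) ^ (((k - j : ℤ) : ℝ) * α) else 0)) ^ P
      ≤ ((∑' m : ℕ, ((2:ℝ≥0∞) ^ (-(α * P))) ^ m)
          + (∑' m : ℕ, ((2:ℝ≥0∞) ^ (-α)) ^ m) ^ P) * ∑' j : ℤ, (lam j : ℝ≥0∞) ^ P := by
  set W : ℤ → ℤ → ℝ≥0∞ :=
    fun k j => if k ≤ j then (2:ℝ≥0∞) ^ (((k - j : ℤ) : ℝ) * α) else 0 with hWdef
  set SgP : ℝ≥0∞ := ∑' m : ℕ, ((2:ℝ≥0∞) ^ (-(α * P))) ^ m with hSgP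
  set Sg : ℝ≥0∞ := ∑' m : ℕ, ((2:ℝ≥0∞) ^ (-α)) ^ m with hSg
  rcases le_or_gt P 1 with hP1 | hP1
  · -- case P ≤ 1
    have hW : ∀ k j : ℤ, W k j ^ P
        = (if k ≤ j then (2:ℝ≥0∞) ^ (((k - j : ℤ) : ℝ) * (α * P)) else 0) := by
      intro k j
      simp only [hWdef]
      by_cases h : k ≤ j
      · rw [if_pos h, if_pos h, ← ENNReal.rpow_mul, mul_assoc]
      · rw [if_neg h, if_neg h, ENNReal.zero_rpow_of_pos hP0]
    calc ∑' k : ℤ, (∑' j : ℤ, (lam j : ℝ≥0∞) * W k j) ^ P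
        ≤ ∑' k : ℤ, ∑' j : ℤ, ((lam j : ℝ≥0∞) * W k j) ^ P :=
          ENNReal.tsum_le_tsum fun k => my_tsum_rpow_le_int hP0 hP1 _
      _ = ∑' k : ℤ, ∑' j : ℤ, (lam j : ℝ≥0∞) ^ P
            * (if k ≤ j then (2:ℝ≥0∞) ^ (((k - j : ℤ) : ℝ) * (α * P)) else 0) := by
          refine tsum_congr fun k => tsum_congr fun j => ?_
          rw [ENNReal.mul_rpow_of_nonneg _ _ hP0.le, hW]
      _ = ∑' j : ℤ, (lam j : ℝ≥0∞) ^ P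
            * ∑' k : ℤ, (if k ≤ j then (2:ℝ≥0∞) ^ (((k - j : ℤ) : ℝ) * (α * P)) else 0) := by
          rw [ENNReal.tsum_comm]
          exact tsum_congr fun j => ENNReal.tsum_mul_left
      _ = ∑' j : ℤ, (lam j : ℝ≥0∞) ^ P * SgP := by
          exact tsum_congr fun j => by rw [geomZ_left (α * P) j]
      _ = SgP * ∑' j : ℤ, (lam j : ℝ≥0∞) ^ P := by
          rw [ENNReal.tsum_mul_right, mul_comm]
      _ ≤ (SgP + Sg ^ P) * ∑' j : ℤ, (lam j : ℝ≥0∞) ^ P :=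
          mul_le_mul_left le_self_add _
  · -- case 1 < P
    have hPne : P ≠ 0 := hP0.ne'
    have hP1ne : P - 1 ≠ 0 := sub_ne_zero.2 (ne_of_gt hP1)
    have hpq : (P / (P - 1)).HolderConjugate P := by
      refine Real.HolderConjugate.symm (Real.holderConjugate_iff.mpr ⟨hP1, ?_⟩)
      field_simp
      ring
    have hP'0 : 0 < P / (P - 1) := hpq.pos
    have hSg_ne_top : Sg ≠ ∞ := geom_ne_top hα
    have hSg_ne_zero : Sg ≠ 0 := fun h => by
      have := geom_one_le (β := α)
      rw [← hSg, h] at this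
      simp at this
    have hWsum_r : ∀ k : ℤ, ∑' j : ℤ, W k j = Sg := fun k => geomZ_right α k
    have hWsum_l : ∀ j : ℤ, ∑' k : ℤ, W k j = Sg := fun j => geomZ_left α j
    -- Hölder per k
    have hk : ∀ k : ℤ, (∑' j : ℤ, (lam j : ℝ≥0∞) * W k j)
        ≤ Sg ^ (1 / (P / (P - 1))) * (∑' j : ℤ, (lam j : ℝ≥0∞) ^ P * W k j) ^ (1 / P) := by
      intro k
      have hsplit : ∀ j : ℤ, (lam j : ℝ≥0∞) * W k j
          = (W k j ^ (1 / (P / (P - 1)))) * ((lam j : ℝ≥0∞) * W k j ^ (1 / P)) := by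
        intro j
        have hw : W k j ^ (1 / (P / (P - 1))) * W k j ^ (1 / P) = W k j := by
          rw [← ENNReal.rpow_add_of_nonneg _ _ (by positivity) (by positivity)]
          have hone : 1 / (P / (P - 1)) + 1 / P = 1 := by
            have h := hpq.inv_add_inv_eq_one
            rw [one_div, one_div]
            linarith
          rw [hone, ENNReal.rpow_one]
        calc (lam j : ℝ≥0∞) * W k j
            = (lam j : ℝ≥0∞) * (W k j ^ (1 / (P / (P - 1))) * W k j ^ (1 / P)) := by rw [hw]
          _ = W k j ^ (1 / (P / (P - 1))) * ((lam j : ℝ≥0∞) * W k j ^ (1 / P)) := by ring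
      calc ∑' j : ℤ, (lam j : ℝ≥0∞) * W k j
          = ∑' j : ℤ, (W k j ^ (1 / (P / (P - 1)))) * ((lam j : ℝ≥0∞) * W k j ^ (1 / P)) :=
            tsum_congr hsplit
        _ ≤ (∑' j : ℤ, (W k j ^ (1 / (P / (P - 1)))) ^ (P / (P - 1))) ^ (1 / (P / (P - 1)))
            * (∑' j : ℤ, ((lam j : ℝ≥0∞) * W k j ^ (1 / P)) ^ P) ^ (1 / P) :=
            my_tsum_mul_le hpq _ _
        _ = Sg ^ (1 / (P / (P - 1))) * (∑' j : ℤ, (lam j : ℝ≥0∞) ^ P * W k j) ^ (1 / P) := by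
            congr 2
            · rw [← hWsum_r k]
              refine tsum_congr fun j => ?_
              rw [← ENNReal.rpow_mul, one_div_mul_cancel (ne_of_gt hP'0), ENNReal.rpow_one]
            · refine tsum_congr fun j => ?_
              rw [ENNReal.mul_rpow_of_nonneg _ _ hP0.le, ← ENNReal.rpow_mul,
                one_div_mul_cancel hPne, ENNReal.rpow_one]
    calc ∑' k : ℤ, (∑' j : ℤ, (lam j : ℝ≥0∞) * W k j) ^ P
        ≤ ∑' k : ℤ, (Sg ^ (1 / (P / (P - 1)))
            * (∑' j : ℤ, (lam j : ℝ≥0∞) ^ P * W k j) ^ (1 / P)) ^ P :=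
          ENNReal.tsum_le_tsum fun k => ENNReal.rpow_le_rpow (hk k) hP0.le
      _ = ∑' k : ℤ, Sg ^ ((1 / (P / (P - 1))) * P) * ∑' j : ℤ, (lam j : ℝ≥0∞) ^ P * W k j := by
          refine tsum_congr fun k => ?_
          rw [ENNReal.mul_rpow_of_nonneg _ _ hP0.le, ← ENNReal.rpow_mul, ← ENNReal.rpow_mul,
            one_div_mul_cancel hPne, ENNReal.rpow_one]
      _ = Sg ^ ((1 / (P / (P - 1))) * P) * ∑' j : ℤ, (lam j : ℝ≥0∞) ^ P * ∑' k : ℤ, W k j := by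
          rw [ENNReal.tsum_mul_left]
          congr 1
          rw [ENNReal.tsum_comm]
          exact tsum_congr fun j => ENNReal.tsum_mul_left
      _ = Sg ^ ((1 / (P / (P - 1))) * P) * (Sg * ∑' j : ℤ, (lam j : ℝ≥0∞) ^ P) := by
          congr 1
          calc ∑' j : ℤ, (lam j : ℝ≥0∞) ^ P * ∑' k : ℤ, W k j
              = ∑' j : ℤ, (lam j : ℝ≥0∞) ^ P * Sg :=
                tsum_congr fun j => by rw [hWsum_l j]
            _ = Sg * ∑' j : ℤ, (lam j : ℝ≥0∞) ^ P := by
                rw [ENNReal.tsum_mul_right, mul_comm]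
      _ ≤ (SgP + Sg ^ P) * ∑' j : ℤ, (lam j : ℝ≥0∞) ^ P := by
          rw [← mul_assoc]
          refine mul_le_mul_left ?_ _
          have h2 : Sg ^ ((1 / (P / (P - 1))) * P) * Sg
              = Sg ^ ((1 / (P / (P - 1))) * P + 1) := by
            rw [ENNReal.rpow_add _ _ hSg_ne_zero hSg_ne_top, ENNReal.rpow_one]
          have h3 : (1 / (P / (P - 1))) * P + 1 = P := by
            field_simp
            ring
          rw [h2, h3]
          exact le_add_self

section SliceAux

variable {n : ℕ} {t r : ℝ} {q : ℝ≥0∞}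

/-- the inner average. -/
def AA (n : ℕ) (t r : ℝ) (g : En n → ℝ≥0∞) (x : En n) : ℝ≥0∞ :=
  ((volume (ball x t))⁻¹ * ∫⁻ y in ball x t, g y ^ r) ^ (1 / r)

lemma sliceNorm_eq (hq' : q ≠ ∞) (g : En n → ℝ≥0∞) :
    sliceNorm n t r q g = (∫⁻ x, (AA n t r g x) ^ q.toReal) ^ (1 / q.toReal) := by
  rw [sliceNorm, if_neg hq']; rfl

lemma meas_inner {u : En n → ℝ≥0∞} (hu : Measurable u) :
    Measurable fun x : En n => ∫⁻ y in ball x t, u y := by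
  have h1 : ∀ x : En n, ∫⁻ y in ball x t, u y = ∫⁻ y, (ball x t).indicator u y := by
    intro x; rw [lintegral_indicator measurableSet_ball]
  simp_rw [h1]
  have h2 : (fun p : En n × En n => (ball p.1 t).indicator u p.2)
      = ({p : En n × En n | dist p.2 p.1 < t}).indicator (fun p => u p.2) := by
    ext p
    by_cases h : dist p.2 p.1 < t <;>
      simp [Set.indicator_apply, Metric.mem_ball, h]
  have h3 : Measurable fun p : En n × En n => (ball p.1 t).indicator u p.2 := by
    rw [h2]
    exact (hu.comp measurable_snd).indicator
      (measurableSet_lt (measurable_snd.dist measurable_fst) measurable_const)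
  exact h3.lintegral_prod_right'

lemma AA_measurable (hr0 : 0 < r) {g : En n → ℝ≥0∞} (hg : Measurable g) :
    Measurable (AA n t r g) := by
  have hb : ∀ x : En n, volume (ball x t) = volume (ball (0 : En n) t) := fun x =>
    Measure.addHaar_ball_center volume x t
  unfold AA
  simp_rw [hb]
  exact (measurable_const.mul (meas_inner (hg.pow_const r))).pow_const _

lemma AA_mono (hr0 : 0 ≤ r) {g h : En n → ℝ≥0∞} (hgh : ∀ᵐ y ∂(volume : Measure (En n)), g y ≤ h y)
    (x : En n) : AA n t r g x ≤ AA n t r h x := by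
  refine ENNReal.rpow_le_rpow (mul_le_mul_right ?_ _) (by positivity)
  refine lintegral_mono_ae (ae_restrict_of_ae (hgh.mono fun y hy => ?_))
  exact ENNReal.rpow_le_rpow hy hr0

lemma sliceNorm_mono (hq' : q ≠ ∞) (hr0 : 0 ≤ r) {g h : En n → ℝ≥0∞}
    (hgh : ∀ᵐ y ∂(volume : Measure (En n)), g y ≤ h y) :
    sliceNorm n t r q g ≤ sliceNorm n t r q h := by
  rw [sliceNorm_eq hq', sliceNorm_eq hq']
  refine ENNReal.rpow_le_rpow (lintegral_mono fun x => ?_) (by positivity)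
  exact ENNReal.rpow_le_rpow (AA_mono hr0 hgh x) ENNReal.toReal_nonneg

lemma my_lintegral_Lp_tsum_le {X : Type*} [MeasurableSpace X] (μ : Measure X) {s : ℝ}
    (hs : 1 ≤ s) {g : ℕ → X → ℝ≥0∞} (hg : ∀ j, Measurable (g j)) :
    (∫⁻ x, (∑' j, g j x) ^ s ∂μ) ^ (1 / s) ≤ ∑' j, (∫⁻ x, g j x ^ s ∂μ) ^ (1 / s) := by
  have hs0 : 0 < s := lt_of_lt_of_le one_pos hs
  have fin : ∀ N : ℕ, (∫⁻ x, (∑ j ∈ Finset.range N, g j x) ^ s ∂μ) ^ (1 / s)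
      ≤ ∑ j ∈ Finset.range N, (∫⁻ x, g j x ^ s ∂μ) ^ (1 / s) := by
    intro N
    induction N with
    | zero =>
      simp only [Finset.range_zero, Finset.sum_empty]
      rw [ENNReal.zero_rpow_of_pos hs0, lintegral_zero,
        ENNReal.zero_rpow_of_pos (show (0:ℝ) < 1/s by positivity)]
    | succ N ih =>
      have h := ENNReal.lintegral_Lp_add_le (μ := μ)
        (f := fun x => ∑ j ∈ Finset.range N, g j x) (g := g N)
        (Finset.measurable_sum _ (fun j _ => hg j)).aemeasurable (hg N).aemeasurable hs
      simp only [Finset.sum_range_succ]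
      exact le_trans (le_of_eq (by simp [Pi.add_apply])) (le_trans h (add_le_add ih le_rfl))
  have hmeas : ∀ N : ℕ, Measurable fun x => (∑ j ∈ Finset.range N, g j x) ^ s :=
    fun N => (Finset.measurable_sum _ (fun j _ => hg j)).pow_const s
  have hmono : Monotone fun N x => (∑ j ∈ Finset.range N, g j x) ^ s := by
    intro N M hNM
    intro x
    exact ENNReal.rpow_le_rpow (Finset.sum_le_sum_of_subset (Finset.range_subset_range.2 hNM)) hs0.le
  calc (∫⁻ x, (∑' j, g j x) ^ s ∂μ) ^ (1 / s)
      = (∫⁻ x, ⨆ N, (∑ j ∈ Finset.range N, g j x) ^ s ∂μ) ^ (1 / s) := by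
        congr 1
        refine lintegral_congr fun x => ?_
        rw [ENNReal.tsum_eq_iSup_nat]
        exact my_rpow_iSup hs0 _
    _ = (⨆ N, ∫⁻ x, (∑ j ∈ Finset.range N, g j x) ^ s ∂μ) ^ (1 / s) := by
        rw [lintegral_iSup hmeas (fun N M h => hmono h)]
    _ = ⨆ N, (∫⁻ x, (∑ j ∈ Finset.range N, g j x) ^ s ∂μ) ^ (1 / s) := by
        exact my_rpow_iSup (show (0:ℝ) < 1/s by positivity) _
    _ ≤ ∑' j, (∫⁻ x, g j x ^ s ∂μ) ^ (1 / s) :=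
        iSup_le fun N => le_trans (fin N) (ENNReal.sum_le_tsum _)

lemma AA_tsum_le (hr : 1 ≤ r) {g : ℕ → En n → ℝ≥0∞} (hg : ∀ j, Measurable (g j)) (x : En n) :
    AA n t r (fun y => ∑' j, g j y) x ≤ ∑' j, AA n t r (g j) x := by
  have hr0 : (0:ℝ) < r := lt_of_lt_of_le one_pos hr
  unfold AA
  rw [ENNReal.mul_rpow_of_nonneg _ _ (by positivity : (0:ℝ) ≤ 1/r)]
  calc ((volume (ball x t))⁻¹) ^ (1/r) * (∫⁻ y in ball x t, (∑' j, g j y) ^ r) ^ (1/r)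
      ≤ ((volume (ball x t))⁻¹) ^ (1/r) * ∑' j, (∫⁻ y in ball x t, g j y ^ r) ^ (1/r) :=
        mul_le_mul_right (my_lintegral_Lp_tsum_le _ hr hg) _
    _ = ∑' j, ((volume (ball x t))⁻¹ * ∫⁻ y in ball x t, g j y ^ r) ^ (1/r) := by
        rw [← ENNReal.tsum_mul_left]
        exact tsum_congr fun j => by
          rw [ENNReal.mul_rpow_of_nonneg _ _ (by positivity : (0:ℝ) ≤ 1/r)]

lemma sliceNorm_tsum_le (hq : 1 ≤ q) (hq' : q ≠ ∞) (hr : 1 ≤ r)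
    {g : ℕ → En n → ℝ≥0∞} (hg : ∀ j, Measurable (g j)) :
    sliceNorm n t r q (fun y => ∑' j, g j y) ≤ ∑' j, sliceNorm n t r q (g j) := by
  have hr0 : (0:ℝ) < r := lt_of_lt_of_le one_pos hr
  have hQ : (1:ℝ) ≤ q.toReal := by
    simpa using ENNReal.toReal_mono hq' hq
  rw [sliceNorm_eq hq']
  calc (∫⁻ x, (AA n t r (fun y => ∑' j, g j y) x) ^ q.toReal) ^ (1 / q.toReal)
      ≤ (∫⁻ x, (∑' j, AA n t r (g j) x) ^ q.toReal) ^ (1 / q.toReal) := by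
        refine ENNReal.rpow_le_rpow (lintegral_mono fun x => ?_) (by positivity)
        exact ENNReal.rpow_le_rpow (AA_tsum_le hr hg x) ENNReal.toReal_nonneg
    _ ≤ ∑' j, (∫⁻ x, (AA n t r (g j) x) ^ q.toReal) ^ (1 / q.toReal) :=
        my_lintegral_Lp_tsum_le _ hQ (fun j => AA_measurable hr0 (hg j))
    _ = ∑' j, sliceNorm n t r q (g j) := tsum_congr fun j => (sliceNorm_eq hq' _).symm

lemma sliceNorm_const_mul (hq : 1 ≤ q) (hq' : q ≠ ∞) (hr : 1 ≤ r) (c : ℝ≥0)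
    (g : En n → ℝ≥0∞) :
    sliceNorm n t r q (fun y => (c : ℝ≥0∞) * g y) = (c : ℝ≥0∞) * sliceNorm n t r q g := by
  have hr0 : (0:ℝ) < r := lt_of_lt_of_le one_pos hr
  have hQ : (1:ℝ) ≤ q.toReal := by simpa using ENNReal.toReal_mono hq' hq
  have hQ0 : (0:ℝ) < q.toReal := lt_of_lt_of_le one_pos hQ
  have hAA : ∀ x, AA n t r (fun y => (c : ℝ≥0∞) * g y) x = (c : ℝ≥0∞) * AA n t r g x := by
    intro x
    unfold AA
    have h1 : ∀ y, ((c : ℝ≥0∞) * g y) ^ r = (c : ℝ≥0∞) ^ r * g y ^ r := fun y =>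
      ENNReal.mul_rpow_of_nonneg _ _ hr0.le
    simp_rw [h1]
    rw [lintegral_const_mul' _ _ (ENNReal.rpow_ne_top_of_nonneg hr0.le ENNReal.coe_ne_top),
      mul_left_comm, ENNReal.mul_rpow_of_nonneg _ _ (by positivity : (0:ℝ) ≤ 1/r),
      ← ENNReal.rpow_mul, mul_one_div_cancel hr0.ne', ENNReal.rpow_one]
  rw [sliceNorm_eq hq', sliceNorm_eq hq']
  simp_rw [hAA]
  have h2 : ∀ x, ((c : ℝ≥0∞) * AA n t r g x) ^ q.toReal
      = (c : ℝ≥0∞) ^ q.toReal * (AA n t r g x) ^ q.toReal := fun x =>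
    ENNReal.mul_rpow_of_nonneg _ _ hQ0.le
  simp_rw [h2]
  rw [lintegral_const_mul' _ _ (ENNReal.rpow_ne_top_of_nonneg hQ0.le ENNReal.coe_ne_top),
    ENNReal.mul_rpow_of_nonneg _ _ (by positivity : (0:ℝ) ≤ 1/q.toReal),
    ← ENNReal.rpow_mul, mul_one_div_cancel hQ0.ne', ENNReal.rpow_one]

lemma sliceNorm_zero (hq : 1 ≤ q) (hq' : q ≠ ∞) (hr : 1 ≤ r) :
    sliceNorm n t r q (fun _ => (0:ℝ≥0∞)) = 0 := by
  have hr0 : (0:ℝ) < r := lt_of_lt_of_le one_pos hr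
  have hQ : (1:ℝ) ≤ q.toReal := by simpa using ENNReal.toReal_mono hq' hq
  have hQ0 : (0:ℝ) < q.toReal := lt_of_lt_of_le one_pos hQ
  rw [sliceNorm_eq hq']
  have : ∀ x : En n, AA n t r (fun _ => (0:ℝ≥0∞)) x = 0 := by
    intro x
    unfold AA
    simp only [ENNReal.zero_rpow_of_pos hr0, lintegral_zero, mul_zero]
    exact ENNReal.zero_rpow_of_pos (show (0:ℝ) < 1/r by positivity)
  simp_rw [this]
  simp only [ENNReal.zero_rpow_of_pos hQ0, lintegral_zero]
  exact ENNReal.zero_rpow_of_pos (show (0:ℝ) < 1/q.toReal by positivity)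

end SliceAux

/-- block decomposition of the homogeneous Herz-slice space (converse direction). -/
theorem homHerzSlice_block_synthesis
    (n : ℕ) (hn : 1 ≤ n) (α t r : ℝ) (hα : 0 < α) (ht : 0 < t) (hr : 1 < r)
    (p : ℝ≥0∞) (hp : 0 < p) (hp' : p ≠ ∞) (q : ℝ≥0∞) (hq : 1 ≤ q) (hq' : q ≠ ∞) :
    ∃ C : ℝ≥0, 0 < C ∧
      ∀ (lam : ℤ → ℝ≥0) (b : ℤ → En n → ℂ) (f : En n → ℂ),
        (∀ k, Measurable (b k)) →
        (∑' k : ℤ, ((lam k : ℝ≥0∞)) ^ p.toReal < ∞) →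
        (∀ k, Function.support (b k) ⊆ ballZ n k) →
        (∀ k, sliceNormC n t r q (b k) ≤ (2 : ℝ≥0∞) ^ (-(k : ℝ) * α)) →
        (∀ᵐ x ∂(volume : Measure (En n)),
          Summable (fun k : ℤ => (lam k : ℝ) * ‖b k x‖) ∧
          f x = ∑' k : ℤ, ((lam k : ℝ) : ℂ) * b k x) →
        herzHomC n t r q α p f ^ p.toReal
          ≤ (C : ℝ≥0∞) * ∑' k : ℤ, ((lam k : ℝ≥0∞)) ^ p.toReal := by
  have hr0 : (0:ℝ) < r := lt_trans one_pos hr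
  have hr1 : (1:ℝ) ≤ r := hr.le
  have hP0 : 0 < p.toReal := ENNReal.toReal_pos hp.ne' hp'
  set P := p.toReal with hPdef
  set SgP : ℝ≥0∞ := ∑' m : ℕ, ((2:ℝ≥0∞) ^ (-(α * P))) ^ m with hSgPdef
  set Sg : ℝ≥0∞ := ∑' m : ℕ, ((2:ℝ≥0∞) ^ (-α)) ^ m with hSgdef
  have hC0_ne_top : SgP + Sg ^ P ≠ ∞ := by
    refine ENNReal.add_ne_top.2 ⟨geom_ne_top (by positivity), ?_⟩
    exact ENNReal.rpow_ne_top_of_nonneg hP0.le (geom_ne_top hα)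
  have hC0_one : (1:ℝ≥0∞) ≤ SgP + Sg ^ P := le_trans geom_one_le le_self_add
  refine ⟨(SgP + Sg ^ P).toNNReal, ?_, ?_⟩
  · exact ENNReal.toNNReal_pos (lt_of_lt_of_le zero_lt_one hC0_one).ne' hC0_ne_top
  intro lam b f hb _hlam hsupp hnorm hae
  have hshell : ∀ k : ℤ, MeasurableSet (shell n k) := fun k =>
    measurableSet_closedBall.diff measurableSet_closedBall
  set e : ℕ ≃ ℤ := (Denumerable.eqv ℤ).symm with he
  -- pointwise bound
  have hpt : ∀ᵐ x ∂(volume : Measure (En n)),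
      (‖f x‖₊ : ℝ≥0∞) ≤ ∑' j : ℤ, (lam j : ℝ≥0∞) * (‖b j x‖₊ : ℝ≥0∞) := by
    filter_upwards [hae] with x hx
    obtain ⟨hsum, hfx⟩ := hx
    have hsum' : Summable fun j : ℤ => ‖((lam j : ℝ) : ℂ) * b j x‖₊ := by
      rw [← NNReal.summable_coe]
      have heq : (fun j : ℤ => (‖((lam j : ℝ) : ℂ) * b j x‖₊ : ℝ))
          = fun j : ℤ => (lam j : ℝ) * ‖b j x‖ := by
        funext j
        rw [coe_nnnorm, norm_mul, Complex.norm_real, Real.norm_eq_abs,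
          abs_of_nonneg (lam j).coe_nonneg]
      rw [heq]; exact hsum
    calc (‖f x‖₊ : ℝ≥0∞) = (‖∑' j : ℤ, ((lam j : ℝ) : ℂ) * b j x‖₊ : ℝ≥0∞) := by rw [hfx]
      _ ≤ ((∑' j : ℤ, ‖((lam j : ℝ) : ℂ) * b j x‖₊ : ℝ≥0) : ℝ≥0∞) :=
          ENNReal.coe_le_coe.2 (nnnorm_tsum_le hsum')
      _ = ∑' j : ℤ, (‖((lam j : ℝ) : ℂ) * b j x‖₊ : ℝ≥0∞) := ENNReal.coe_tsum hsum'
      _ = ∑' j : ℤ, (lam j : ℝ≥0∞) * (‖b j x‖₊ : ℝ≥0∞) := by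
          refine tsum_congr fun j => ?_
          rw [nnnorm_mul, ENNReal.coe_mul, Complex.nnnorm_real, NNReal.nnnorm_eq]
  -- support fact
  have hball : ∀ j k : ℤ, j ≤ k - 1 → ∀ x, x ∈ shell n k → b j x = 0 := by
    intro j k hjk x hx
    by_contra hbx
    have hxj : x ∈ ballZ n j := hsupp j hbx
    have hsub : ballZ n j ⊆ ballZ n (k - 1) := by
      unfold ballZ
      exact closedBall_subset_closedBall (zpow_le_zpow_right₀ one_le_two hjk)
    exact hx.2 (hsub hxj)
  -- per-k estimate
  have hNk : ∀ k : ℤ, (2:ℝ≥0∞) ^ ((k:ℝ) * α)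
      * sliceNorm n t r q ((shell n k).indicator fun y => (‖f y‖₊ : ℝ≥0∞))
      ≤ ∑' j : ℤ, (lam j : ℝ≥0∞)
          * (if k ≤ j then (2:ℝ≥0∞) ^ (((k - j : ℤ) : ℝ) * α) else 0) := by
    intro k
    set gk : ℤ → En n → ℝ≥0∞ :=
      fun j => (shell n k).indicator fun y => (lam j : ℝ≥0∞) * (‖b j y‖₊ : ℝ≥0∞) with hgk
    have hgkmeas : ∀ j, Measurable (gk j) := fun j =>
      (measurable_const.mul (hb j).nnnorm.coe_nnreal_ennreal).indicator (hshell k)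
    have h1 : sliceNorm n t r q ((shell n k).indicator fun y => (‖f y‖₊ : ℝ≥0∞))
        ≤ sliceNorm n t r q (fun x => ∑' j : ℤ, gk j x) := by
      refine sliceNorm_mono hq' hr0.le ?_
      filter_upwards [hpt] with x hx
      by_cases hxs : x ∈ shell n k
      · simp only [hgk, Set.indicator_of_mem hxs]
        exact hx
      · simp only [hgk, Set.indicator_of_notMem hxs, tsum_zero, le_refl]
    have h2 : sliceNorm n t r q (fun x => ∑' j : ℤ, gk j x)
        ≤ ∑' j : ℤ, sliceNorm n t r q (gk j) := by
      have hre : (fun x => ∑' j : ℤ, gk j x) = fun x => ∑' m : ℕ, gk (e m) x := by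
        funext x
        exact (Equiv.tsum_eq e fun j => gk j x).symm
      rw [hre, ← Equiv.tsum_eq e fun j => sliceNorm n t r q (gk j)]
      exact sliceNorm_tsum_le hq hq' hr1 fun m => hgkmeas (e m)
    have h3 : ∀ j : ℤ, sliceNorm n t r q (gk j)
        ≤ (lam j : ℝ≥0∞) * (if k ≤ j then (2:ℝ≥0∞) ^ (-(j:ℝ) * α) else 0) := by
      intro j
      have hconst : gk j = fun y => (lam j : ℝ≥0∞)
          * ((shell n k).indicator (fun y => (‖b j y‖₊ : ℝ≥0∞)) y) := by
        funext y
        by_cases hy : y ∈ shell n k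
        · simp only [hgk, Set.indicator_of_mem hy]
        · simp only [hgk, Set.indicator_of_notMem hy, mul_zero]
      rw [hconst, sliceNorm_const_mul hq hq' hr1]
      refine mul_le_mul_right ?_ _
      by_cases hkj : k ≤ j
      · rw [if_pos hkj]
        refine le_trans (sliceNorm_mono hq' hr0.le
          (Filter.Eventually.of_forall fun y => Set.indicator_le_self _ _ y)) ?_
        exact hnorm j
      · rw [if_neg hkj]
        have hz : ((shell n k).indicator (fun y => (‖b j y‖₊ : ℝ≥0∞))) = fun _ => (0:ℝ≥0∞) := by
          funext y
          by_cases hy : y ∈ shell n k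
          · rw [Set.indicator_of_mem hy, hball j k (by omega) y hy]
            simp
          · rw [Set.indicator_of_notMem hy]
        rw [hz, sliceNorm_zero hq hq' hr1]
    calc (2:ℝ≥0∞) ^ ((k:ℝ) * α)
        * sliceNorm n t r q ((shell n k).indicator fun y => (‖f y‖₊ : ℝ≥0∞))
        ≤ (2:ℝ≥0∞) ^ ((k:ℝ) * α) * ∑' j : ℤ, sliceNorm n t r q (gk j) :=
          mul_le_mul_right (h1.trans h2) _
      _ ≤ (2:ℝ≥0∞) ^ ((k:ℝ) * α) * ∑' j : ℤ, (lam j : ℝ≥0∞)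
            * (if k ≤ j then (2:ℝ≥0∞) ^ (-(j:ℝ) * α) else 0) :=
          mul_le_mul_right (ENNReal.tsum_le_tsum h3) _
      _ = ∑' j : ℤ, (lam j : ℝ≥0∞)
            * (if k ≤ j then (2:ℝ≥0∞) ^ (((k - j : ℤ) : ℝ) * α) else 0) := by
          rw [← ENNReal.tsum_mul_left]
          refine tsum_congr fun j => ?_
          rw [mul_left_comm]
          congr 1
          by_cases hkj : k ≤ j
          · rw [if_pos hkj, if_pos hkj,
              ← ENNReal.rpow_add _ _ (by norm_num) ENNReal.ofNat_ne_top]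
            congr 1
            push_cast
            ring
          · rw [if_neg hkj, if_neg hkj, mul_zero]
  -- conclude
  simp only [herzHomC, herzHom, if_neg hp']
  rw [← ENNReal.rpow_mul, one_div_mul_cancel hP0.ne', ENNReal.rpow_one]
  calc ∑' k : ℤ, ((2:ℝ≥0∞) ^ ((k:ℝ) * α)
        * sliceNorm n t r q ((shell n k).indicator fun y => (‖f y‖₊ : ℝ≥0∞))) ^ P
      ≤ ∑' k : ℤ, (∑' j : ℤ, (lam j : ℝ≥0∞)
          * (if k ≤ j then (2:ℝ≥0∞) ^ (((k - j : ℤ) : ℝ) * α) else 0)) ^ P :=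
        ENNReal.tsum_le_tsum fun k => ENNReal.rpow_le_rpow (hNk k) hP0.le
    _ ≤ (SgP + Sg ^ P) * ∑' j : ℤ, (lam j : ℝ≥0∞) ^ P := key_sum hα hP0 lam
    _ = ((SgP + Sg ^ P).toNNReal : ℝ≥0∞) * ∑' j : ℤ, (lam j : ℝ≥0∞) ^ P := by
        rw [ENNReal.coe_toNNReal hC0_ne_top]
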